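/- Let k ≥ 2 and let F = (a_{i,j})_{i,j∈ℤ} be an array over a field satisfying: every adjacent k×k minor equals 1, and every adjacent (k+1)×(k+1) minor equals 0 (tame SL_k-frieze). Suppose further that for each i, the k×k matrices F_{i,j} := (a_{i+r,j+s})_{0≤r,s≤k−1} are invertible. Then the matrix B_j := F_{i,j}^{−1} F_{i,j+1} is independent of i. -/

import Mathlib

/-- For a tame SL_k-frieze, the matrix `F_{i,j}⁻¹ * F_{i,j+1}` does not depend
on the row index `i`. -/
theorem B_independent_of_row {K : Type*} [Field K] (k : ℕ) (hk : 2 ≤ k)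
    (a : ℤ → ℤ → K) (F : ℤ → ℤ → Matrix (Fin k) (Fin k) K)
    (hF : ∀ i j : ℤ, F i j = Matrix.of fun r s : Fin k => a (i + (r : ℤ)) (j + (s : ℤ)))
    (hSL : ∀ i j : ℤ, (F i j).det = 1)
    (htame : ∀ i j : ℤ,
      Matrix.det (Matrix.of fun r s : Fin (k + 1) => a (i + (r : ℤ)) (j + (s : ℤ))) = 0)
    (hinv : ∀ i j : ℤ, IsUnit (F i j)) :
    ∀ i i' j : ℤ, (F i j)⁻¹ * F i (j + 1) = (F i' j)⁻¹ * F i' (j + 1) := by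
  have hk0 : 0 < k := by omega
  -- key step: the statement for i' = i + 1
  have key : ∀ i j : ℤ,
      (F i j)⁻¹ * F i (j + 1) = (F (i + 1) j)⁻¹ * F (i + 1) (j + 1) := by
    intro i j
    have hAdet : IsUnit (F i j).det := by rw [hSL i j]; exact isUnit_one
    -- the coefficient vector expressing row i+k in terms of rows i..i+k-1
    set v : Fin k → K := fun s => a (i + k) (j + s) with hv
    set μ : Fin k → K := Matrix.vecMul v (F i j)⁻¹ with hμdef
    have hμA : Matrix.vecMul μ (F i j) = v := by
      rw [hμdef, Matrix.vecMul_vecMul, Matrix.nonsing_inv_mul _ hAdet, Matrix.vecMul_one]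
    have hrel : ∀ s : Fin k, ∑ r : Fin k, μ r * a (i + r) (j + s) = a (i + k) (j + s) := by
      intro s
      have := congrFun hμA s
      simpa [Matrix.vecMul, dotProduct, hF] using this
    -- the vanishing of the (k+1)×(k+1) minor gives the relation at column j+k
    have hlast : ∑ r : Fin k, μ r * a (i + r) (j + k) = a (i + k) (j + k) := by
      set M : Matrix (Fin (k + 1)) (Fin (k + 1)) K :=
        Matrix.of fun r s : Fin (k + 1) => a (i + (r : ℤ)) (j + (s : ℤ)) with hM
      have hMdet : M.det = 0 := htame i j
      set c : Fin (k + 1) → K := fun r => if h : (r : ℕ) < k then μ ⟨r, h⟩ else 0 with hc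
      set N : Matrix (Fin (k + 1)) (Fin (k + 1)) K :=
        M.updateRow (Fin.last k) (∑ r, c r • M r) with hN
      have hNdet : N.det = 0 := by
        rw [hN, Matrix.det_updateRow_sum, hc]
        simp [hMdet]
      -- last row of N, entrywise
      have hNlast : ∀ s : Fin (k + 1),
          N (Fin.last k) s = ∑ r : Fin k, μ r * a (i + r) (j + s) := by
        intro s
        rw [hN, Matrix.updateRow_self]
        have : (∑ r : Fin (k+1), c r • M r) s = ∑ r : Fin (k+1), c r * M r s := by
          simp [Finset.sum_apply]
        rw [this, Fin.sum_univ_castSucc]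
        have hclast : c (Fin.last k) = 0 := by simp [hc]
        rw [hclast, zero_mul, add_zero]
        refine Finset.sum_congr rfl fun r _ => ?_
        have hcr : c r.castSucc = μ r := by
          simp [hc, Fin.is_lt r]
        rw [hcr, hM]
        simp
      -- N and M agree except at entry (last, last)
      have hagree : ∀ s : Fin (k + 1), s ≠ Fin.last k → N (Fin.last k) s = M (Fin.last k) s := by
        intro s hs
        obtain ⟨s', rfl⟩ := Fin.exists_castSucc_eq.2 hs
        rw [hNlast]
        have : (↑(s'.castSucc) : ℤ) = (s' : ℤ) := by simp
        rw [this, hrel s']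
        simp [hM]
      have hrows : ∀ r : Fin k, N ((Fin.last k).succAbove r) = M ((Fin.last k).succAbove r) := by
        intro r
        rw [hN, Matrix.updateRow_ne]
        exact Fin.succAbove_ne _ r
      -- Laplace expansion along the last row for both M and N
      have eM := Matrix.det_succ_row M (Fin.last k)
      have eN := Matrix.det_succ_row N (Fin.last k)
      have hsub : ∀ s : Fin (k + 1),
          (N.submatrix (Fin.last k).succAbove s.succAbove)
            = (M.submatrix (Fin.last k).succAbove s.succAbove) := by
        intro s
        ext r t
        simp only [Matrix.submatrix_apply]
        rw [hrows r]
      rw [hMdet] at eM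
      rw [hNdet] at eN
      rw [Fin.sum_univ_castSucc] at eM eN
      have hsum_eq : ∑ s : Fin k,
            (-1 : K) ^ ((Fin.last k : ℕ) + (s.castSucc : ℕ)) * N (Fin.last k) s.castSucc *
              (N.submatrix (Fin.last k).succAbove s.castSucc.succAbove).det
          = ∑ s : Fin k,
            (-1 : K) ^ ((Fin.last k : ℕ) + (s.castSucc : ℕ)) * M (Fin.last k) s.castSucc *
              (M.submatrix (Fin.last k).succAbove s.castSucc.succAbove).det := by
        refine Finset.sum_congr rfl fun s _ => ?_
        rw [hsub, hagree _ (Fin.castSucc_lt_last s).ne]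
      have hterm : (-1 : K) ^ ((Fin.last k : ℕ) + ((Fin.last k) : ℕ)) * N (Fin.last k) (Fin.last k) *
              (N.submatrix (Fin.last k).succAbove (Fin.last k).succAbove).det
          = (-1 : K) ^ ((Fin.last k : ℕ) + ((Fin.last k) : ℕ)) * M (Fin.last k) (Fin.last k) *
              (M.submatrix (Fin.last k).succAbove (Fin.last k).succAbove).det := by
        have h := eM.symm.trans eN
        rw [hsum_eq] at h
        exact (add_left_cancel h).symm
      -- the common cofactor equals det (F i j) = 1
      have hcof : (M.submatrix (Fin.last k).succAbove (Fin.last k).succAbove).det = 1 := by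
        have : M.submatrix (Fin.last k).succAbove (Fin.last k).succAbove = F i j := by
          ext r s
          rw [hF]
          simp [hM, Fin.succAbove_last]
        rw [this, hSL]
      have hNM : N (Fin.last k) (Fin.last k) = M (Fin.last k) (Fin.last k) := by
        rw [hsub, hcof, mul_one, mul_one] at hterm
        have hp : ((-1 : K)) ^ ((Fin.last k : ℕ) + ((Fin.last k) : ℕ)) ≠ 0 := by
          apply pow_ne_zero; norm_num
        exact mul_left_cancel₀ hp hterm
      have h1 : N (Fin.last k) (Fin.last k) = ∑ r : Fin k, μ r * a (i + r) (j + k) := by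
        rw [hNlast]
        norm_num
      have h2 : M (Fin.last k) (Fin.last k) = a (i + k) (j + k) := by
        simp [hM]
      rw [h1, h2] at hNM
      exact hNM
    -- the relation holds for all k+1 consecutive columns starting at j
    have hcol : ∀ s : Fin (k + 1),
        ∑ r : Fin k, μ r * a (i + r) (j + s) = a (i + k) (j + s) := by
      intro s
      rcases Fin.eq_castSucc_or_eq_last s with ⟨s', rfl⟩ | rfl
      · have : (↑(s'.castSucc) : ℤ) = (s' : ℤ) := by simp
        rw [this]; exact hrel s'
      · have : (↑(Fin.last k) : ℤ) = (k : ℤ) := by simp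
        rw [this]; exact hlast
    -- the relation for columns j+1 .. j+k
    have hrel1 : ∀ s : Fin k,
        ∑ r : Fin k, μ r * a (i + r) (j + 1 + s) = a (i + k) (j + 1 + s) := by
      intro s
      have hs : (s : ℕ) + 1 < k + 1 := by omega
      have := hcol ⟨(s : ℕ) + 1, hs⟩
      have harg : j + ((⟨(s : ℕ) + 1, hs⟩ : Fin (k+1)) : ℤ) = j + 1 + (s : ℤ) := by
        simp; ring
      rwa [harg] at this
    -- the transvection-like matrix T with T * F i j' = F (i+1) j'
    set T : Matrix (Fin k) (Fin k) K := Matrix.of fun r s =>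
      if (r : ℕ) + 1 < k then (if (s : ℕ) = (r : ℕ) + 1 then (1 : K) else 0) else μ s with hT
    have hTmul : ∀ j' : ℤ,
        (∀ s : Fin k, ∑ r : Fin k, μ r * a (i + r) (j' + s) = a (i + k) (j' + s)) →
        T * F i j' = F (i + 1) j' := by
      intro j' hrel'
      ext r s
      rw [Matrix.mul_apply, hF, hF]
      simp only [Matrix.of_apply, hT]
      by_cases hr : (r : ℕ) + 1 < k
      · simp only [if_pos hr]
        have : ∀ t : Fin k, ((if (t : ℕ) = (r : ℕ) + 1 then (1:K) else 0) * a (i + t) (j' + s))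
            = if t = (⟨(r : ℕ) + 1, hr⟩ : Fin k) then a (i + t) (j' + s) else 0 := by
          intro t
          by_cases h : (t : ℕ) = (r : ℕ) + 1
          · rw [if_pos h, if_pos (Fin.ext h), one_mul]
          · rw [if_neg h, if_neg (fun hh => h (by rw [hh])), zero_mul]
        rw [Finset.sum_congr rfl (fun t _ => this t), Finset.sum_ite_eq' Finset.univ]
        simp only [Finset.mem_univ, if_pos]
        congr 1
        simp; ring
      · simp only [if_neg hr]
        have hrk : (r : ℕ) = k - 1 := by have := r.is_lt; omega
        have hre := hrel' s
        rw [hre]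
        have harg : i + 1 + ((r : ℕ) : ℤ) = i + (k : ℤ) := by omega
        rw [harg]
    have hTA : T * F i j = F (i + 1) j := hTmul j hrel
    have hTA1 : T * F i (j + 1) = F (i + 1) (j + 1) := hTmul (j + 1) hrel1
    have hTdet : IsUnit T.det := by
      have : T.det * (F i j).det = 1 := by
        rw [← Matrix.det_mul, hTA, hSL]
      exact IsUnit.of_mul_eq_one _ this
    rw [← hTA, ← hTA1, Matrix.mul_inv_rev, Matrix.mul_assoc, ← Matrix.mul_assoc T⁻¹,
      Matrix.nonsing_inv_mul _ hTdet, Matrix.one_mul]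
  -- extend from step 1 to arbitrary differences
  have main : ∀ (n : ℤ) (i j : ℤ),
      (F i j)⁻¹ * F i (j + 1) = (F (i + n) j)⁻¹ * F (i + n) (j + 1) := by
    intro n
    induction n using Int.induction_on with
    | zero => simp
    | succ m ih =>
      intro i j
      rw [ih i j, key (i + m) j]
      norm_num [add_assoc]
    | pred m ih =>
      intro i j
      rw [ih i j]
      have := key (i + (-(m : ℤ) - 1)) j
      have harg : i + (-(m : ℤ) - 1) + 1 = i + -(m : ℤ) := by ring
      rw [harg] at this
      rw [← this]
  intro i i' j
  have := main (i' - i) i j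
  rwa [add_sub_cancel] at this
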